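/- Let s, δ, n be integers with 3 ≤ s ≤ δ − 1, n ≥ 6δ − 4 and n ≥ (δ² + 7δ + 4)/6. Then e(K_δ ∨ (K_{n-2δ+1} ∪ (δ-1)K_1)) − e(K_s ∨ (K_{n-s-(δ+1-s)(s-1)} ∪ (s-1)K_{δ+1-s})) = (1/2)(δ−s)(s³ − (δ+5)s² + (2n+δ+7)s − 4n + 3δ − 3) > 0. -/
import Mathlib


theorem edgeCount_diff_case3 (s δ n : ℕ) (hs : 3 ≤ s) (hsd : s ≤ δ - 1)
    (hn1 : 6 * δ - 4 ≤ n) (hn2 : ((δ : ℝ) ^ 2 + 7 * δ + 4) / 6 ≤ (n : ℝ)) :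
    (((n : ℝ) - δ + 1) * ((n : ℝ) - δ) / 2 + δ * (δ - 1)) -
        (((n : ℝ) - (δ + 1 - s) * (s - 1)) * ((n : ℝ) - (δ + 1 - s) * (s - 1) - 1) / 2 +
          s * (s - 1) * (δ + 1 - s) + (s - 1) * ((δ + 1 - s) * (δ + 1 - s - 1) / 2)) =
      (1 / 2) * ((δ : ℝ) - s) *
        ((s : ℝ) ^ 3 - (δ + 5) * s ^ 2 + (2 * n + δ + 7) * s - 4 * n + 3 * δ - 3) ∧
    0 < (1 / 2) * ((δ : ℝ) - s) *
        ((s : ℝ) ^ 3 - (δ + 5) * s ^ 2 + (2 * n + δ + 7) * s - 4 * n + 3 * δ - 3) := by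
  have hδ4 : 4 ≤ δ := by omega
  have hsd' : s + 1 ≤ δ := by omega
  have hsdR : (s : ℝ) + 1 ≤ (δ : ℝ) := by exact_mod_cast hsd'
  have hsR : (3 : ℝ) ≤ (s : ℝ) := by exact_mod_cast hs
  have hn1' : 6 * δ ≤ n + 4 := by omega
  have hn1R : 6 * (δ : ℝ) ≤ (n : ℝ) + 4 := by exact_mod_cast hn1'
  constructor
  · ring
  · have h1 : 0 < (δ : ℝ) - s := by linarith
    have h2 : 0 < (s : ℝ) ^ 3 - (δ + 5) * s ^ 2 + (2 * n + δ + 7) * s - 4 * n + 3 * δ - 3 := by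
      nlinarith [mul_nonneg (sub_nonneg.2 hsR) (by linarith : (0:ℝ) ≤ (δ:ℝ) - 1 - s),
        mul_nonneg (sub_nonneg.2 hsR) (by linarith : (0:ℝ) ≤ (n:ℝ) - 6 * δ + 4),
        mul_nonneg (by linarith : (0:ℝ) ≤ (δ:ℝ) - 1 - s) (by linarith : (0:ℝ) ≤ 6*(n:ℝ) - δ^2 - 7*δ - 4),
        mul_nonneg (mul_nonneg (sub_nonneg.2 hsR) (by linarith : (0:ℝ) ≤ (δ:ℝ) - 1 - s)) (by linarith : (0:ℝ) ≤ (δ:ℝ) - 1 - s),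
        sq_nonneg ((s:ℝ) - 3), sq_nonneg ((δ:ℝ) - 1 - s)]
    positivity
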